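/- arXiv:1012.4086 — 7 statements merged into one kernel-verified Lean document; each statement's English description precedes it below -/
import Mathlib

section
/- Let n be a natural number, and fix vectors a, b : Fin n → ℤ and an integer c. Then the set of integers { ⌊((∑ j, a j * (u j − b j)) + c) / m⌋ : m ∈ ℤ, m ≥ 1, u : Fin n → ℤ with 0 ≤ u j < m for all j } is a finite subset of ℤ (here ⌊·/m⌋ denotes the floor of the rational quotient, i.e. integer division rounding towards −∞). -/
/-- Lemma 3.5(i): the set of Thomsen coefficients
`⌊((∑ j, a j * (u j − b j)) + c) / m⌋` over all `m ≥ 1` and `u ∈ P_m^n`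
is a finite subset of `ℤ`. -/
theorem stmt_0 (n : ℕ) (a b : Fin n → ℤ) (c : ℤ) :
    Set.Finite {q : ℤ | ∃ m : ℤ, 1 ≤ m ∧ ∃ u : Fin n → ℤ,
      (∀ j, 0 ≤ u j ∧ u j < m) ∧
      q = ⌊(((∑ j, a j * (u j - b j)) + c : ℤ) : ℚ) / (m : ℚ)⌋} := by
  set K : ℤ := (∑ j, |a j| * (1 + |b j|)) + |c| with hK
  apply Set.Finite.subset (Set.finite_Icc (-K) K)
  rintro q ⟨m, hm, u, hu, rfl⟩
  set S : ℤ := (∑ j, a j * (u j - b j)) + c with hS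
  have hSbound : |S| ≤ m * K := by
    have h1 : |S| ≤ (∑ j, |a j * (u j - b j)|) + |c| :=
      le_trans (abs_add_le _ _) (by gcongr; exact Finset.abs_sum_le_sum_abs _ _)
    have h2 : ∀ j, |a j * (u j - b j)| ≤ m * (|a j| * (1 + |b j|)) := by
      intro j
      rw [abs_mul]
      have hub : |u j - b j| ≤ m * (1 + |b j|) := by
        have := (hu j).1; have := (hu j).2
        have habs : |u j - b j| ≤ |u j| + |b j| := abs_sub _ _
        have : |u j| ≤ m := by rw [abs_of_nonneg (hu j).1]; linarith [(hu j).2]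
        nlinarith [abs_nonneg (b j), abs_nonneg (u j)]
      calc |a j| * |u j - b j| ≤ |a j| * (m * (1 + |b j|)) := by
            exact mul_le_mul_of_nonneg_left hub (abs_nonneg _)
        _ = m * (|a j| * (1 + |b j|)) := by ring
    have h3 : (∑ j, |a j * (u j - b j)|) ≤ ∑ j, m * (|a j| * (1 + |b j|)) :=
      Finset.sum_le_sum fun j _ => h2 j
    have h4 : |c| ≤ m * |c| := le_mul_of_one_le_left (abs_nonneg _) hm
    calc |S| ≤ (∑ j, m * (|a j| * (1 + |b j|))) + m * |c| := by linarith
      _ = m * K := by rw [hK, ← Finset.mul_sum]; ring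
  have hmQ : (0 : ℚ) < (m : ℚ) := by exact_mod_cast lt_of_lt_of_le one_pos hm
  have hup : (S : ℚ) / m ≤ K := by
    rw [div_le_iff₀ hmQ]
    have h : S ≤ m * K := le_trans (le_abs_self _) hSbound
    have h' : (S : ℚ) ≤ (m : ℚ) * K := by exact_mod_cast h
    nlinarith
  have hlo : (-K : ℚ) ≤ (S : ℚ) / m := by
    rw [le_div_iff₀ hmQ]
    have h : -(m * K) ≤ S := neg_le_of_abs_le hSbound
    have h' : (-(m * K) : ℚ) ≤ (S : ℚ) := by exact_mod_cast h
    nlinarith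
  constructor
  · exact Int.le_floor.mpr (by exact_mod_cast hlo)
  · exact_mod_cast le_trans (Int.floor_le _) hup
end

section
/- Let n and k be natural numbers, A : Fin k → Fin n → ℤ a family of integer row vectors, w : Fin k → ℤ, b : Fin n → ℤ, and let l, m be positive integers. Then { (fun i => ⌊((∑ j, A i j * (u j − b j)) + w i) / m⌋) : u : Fin n → ℤ with 0 ≤ u j < m for all j } ⊆ { (fun i => ⌊((∑ j, A i j * (u j − l * b j)) + l * w i) / (l * m)⌋) : u : Fin n → ℤ with 0 ≤ u j < l * m for all j }, as subsets of (Fin k → ℤ). (Floors are floors of rational quotients.) -/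
/-- Lemma 3.5(iii): `𝔇(D)_m ⊆ 𝔇(lD)_{lm}` on the level of Thomsen coefficient
tuples. -/
theorem stmt_2 (n k : ℕ) (A : Fin k → Fin n → ℤ) (w : Fin k → ℤ) (b : Fin n → ℤ)
    (l m : ℤ) (hl : 0 < l) (hm : 0 < m) :
    {q : Fin k → ℤ | ∃ u : Fin n → ℤ, (∀ j, 0 ≤ u j ∧ u j < m) ∧
        q = fun i => ⌊(((∑ j, A i j * (u j - b j)) + w i : ℤ) : ℚ) / (m : ℚ)⌋} ⊆
    {q : Fin k → ℤ | ∃ u : Fin n → ℤ, (∀ j, 0 ≤ u j ∧ u j < l * m) ∧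
        q = fun i =>
          ⌊(((∑ j, A i j * (u j - l * b j)) + l * w i : ℤ) : ℚ) / ((l * m : ℤ) : ℚ)⌋} := by
  rintro q ⟨u, hu, rfl⟩
  refine ⟨fun j => l * u j, fun j => ⟨mul_nonneg hl.le (hu j).1,
    mul_lt_mul_of_pos_left (hu j).2 hl⟩, ?_⟩
  funext i
  have key : ((∑ j, A i j * (l * u j - l * b j)) + l * w i : ℤ)
      = l * ((∑ j, A i j * (u j - b j)) + w i) := by
    rw [mul_add, Finset.mul_sum]
    congr 1
    exact Finset.sum_congr rfl fun x _ => by ring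
  rw [key]
  push_cast
  rw [mul_div_mul_left _ _ (by exact_mod_cast hl.ne' : (l : ℚ) ≠ 0)]
end

section
/- Let n be a natural number, m a positive integer, a, b : Fin n → ℤ, and c ∈ ℤ. Then { ⌊((∑ j, a j * (u j − ((m − 1) − b j))) + (m − 1 − c)) / m⌋ : u : Fin n → ℤ with 0 ≤ u j < m for all j } = { −⌊((∑ j, a j * (u j − b j)) + c) / m⌋ : u : Fin n → ℤ with 0 ≤ u j < m for all j }, as subsets of ℤ. (Floors are floors of rational quotients.) -/
lemma key_div (m x : ℤ) (hm : 0 < m) : (m - 1 - x) / m = -(x / m) := by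
  have h0 : 0 ≤ x % m := Int.emod_nonneg x (ne_of_gt hm)
  have h1 : x % m < m := Int.emod_lt_of_pos x hm
  have hx : m - 1 - x = (m - 1 - x % m) + m * (-(x / m)) := by
    have := Int.emod_add_mul_ediv x m; linarith
  rw [hx, Int.add_mul_ediv_left _ _ (ne_of_gt hm),
    Int.ediv_eq_zero_of_lt (by omega) (by omega), zero_add]

lemma key_floor (m x : ℤ) (hm : 0 < m) :
    ⌊((m - 1 - x : ℤ) : ℚ) / (m : ℚ)⌋ = -⌊((x : ℤ) : ℚ) / (m : ℚ)⌋ := by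
  have hmn : ((m.toNat : ℤ)) = m := Int.toNat_of_nonneg hm.le
  have h1 := Rat.floor_intCast_div_natCast (m - 1 - x) m.toNat
  have h2 := Rat.floor_intCast_div_natCast x m.toNat
  have c1 : ((m.toNat : ℚ)) = (m : ℚ) := by exact_mod_cast congrArg (Int.cast : ℤ → ℚ) hmn
  rw [c1, hmn] at h1 h2
  rw [h1, h2, key_div m x hm]

/-- Lemma 3.4(iii), combinatorial form: the substitution `u ↦ (m−1)·𝟙 − u`
negates the Thomsen coefficients, as an equality of subsets of `ℤ`. -/
theorem stmt_3 (n : ℕ) (m : ℤ) (hm : 0 < m) (a b : Fin n → ℤ) (c : ℤ) :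
    {q : ℤ | ∃ u : Fin n → ℤ, (∀ j, 0 ≤ u j ∧ u j < m) ∧
        q = ⌊(((∑ j, a j * (u j - ((m - 1) - b j))) + (m - 1 - c) : ℤ) : ℚ) / (m : ℚ)⌋} =
    {q : ℤ | ∃ u : Fin n → ℤ, (∀ j, 0 ≤ u j ∧ u j < m) ∧
        q = -⌊(((∑ j, a j * (u j - b j)) + c : ℤ) : ℚ) / (m : ℚ)⌋} := by
  have sub : ∀ u : Fin n → ℤ,
      (∑ j, a j * (u j - ((m - 1) - b j))) + (m - 1 - c)
        = m - 1 - ((∑ j, a j * ((m - 1 - u j) - b j)) + c) := by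
    intro u
    have : ∑ j, a j * (u j - ((m - 1) - b j)) = -∑ j, a j * ((m - 1 - u j) - b j) := by
      rw [← Finset.sum_neg_distrib]
      exact Finset.sum_congr rfl fun j _ => by ring
    rw [this]; ring
  have hrange : ∀ u : Fin n → ℤ, (∀ j, 0 ≤ u j ∧ u j < m) →
      ∀ j, 0 ≤ m - 1 - u j ∧ m - 1 - u j < m := by
    intro u hu j; have := hu j; omega
  ext q
  simp only [Set.mem_setOf_eq]
  constructor
  · rintro ⟨u, hu, rfl⟩
    exact ⟨fun j => m - 1 - u j, hrange u hu, by rw [sub u, key_floor _ _ hm]⟩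
  · rintro ⟨u, hu, rfl⟩
    refine ⟨fun j => m - 1 - u j, hrange u hu, ?_⟩
    rw [sub (fun j => m - 1 - u j), key_floor _ _ hm]
    have e : ∑ j, a j * ((m - 1 - (m - 1 - u j)) - b j) = ∑ j, a j * (u j - b j) :=
      Finset.sum_congr rfl fun j _ => by ring
    rw [e]
end

section
/- Fix a natural number d. Let S(d) ⊆ ℤ × ℤ be the union over all positive integers m of the sets { (⌊(d*y − x : ℚ)/m⌋, ⌊(−y : ℚ)/m⌋) : x, y ∈ ℤ, 0 ≤ x < m, 0 ≤ y < m }. Then S(d) = {(−1,−1), (0,−1), (−1,0), (0,0)} ∪ { (i,−1) : i ∈ ℤ, 1 ≤ i ≤ d−1 }. -/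
lemma my_floor_div (a m : ℤ) (hm : 0 < m) : ⌊(a : ℚ) / (m : ℚ)⌋ = a / m := by
  obtain ⟨n, rfl⟩ : ∃ n : ℕ, m = (n : ℤ) := ⟨m.toNat, (Int.toNat_of_nonneg hm.le).symm⟩
  rw [show ((n : ℤ) : ℚ) = (n : ℚ) by push_cast; ring]
  exact Rat.floor_intCast_div_natCast a n

lemma my_ediv_eq (m a q : ℤ) (hm : 0 < m) (h1 : q * m ≤ a) (h2 : a < (q + 1) * m) :
    a / m = q := by
  have h0 : (a - q * m) / m = 0 := by
    apply Int.ediv_eq_zero_of_lt (by omega) (by nlinarith)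
  calc a / m = (a - q * m + q * m) / m := by ring_nf
    _ = (a - q * m) / m + q := Int.add_mul_ediv_right _ _ (ne_of_gt hm)
    _ = q := by omega

/-- §4.1: the set `𝔇` of Thomsen coefficient pairs on the Hirzebruch surface
`Σ_d`. -/
theorem stmt_6 (d : ℕ) :
    {p : ℤ × ℤ | ∃ m : ℤ, 0 < m ∧ ∃ x y : ℤ,
        0 ≤ x ∧ x < m ∧ 0 ≤ y ∧ y < m ∧
        p = (⌊(((d : ℤ) * y - x : ℤ) : ℚ) / (m : ℚ)⌋, ⌊((-y : ℤ) : ℚ) / (m : ℚ)⌋)} =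
    ({(-1, -1), (0, -1), (-1, 0), (0, 0)} : Set (ℤ × ℤ)) ∪
      {p : ℤ × ℤ | ∃ i : ℤ, 1 ≤ i ∧ i ≤ (d : ℤ) - 1 ∧ p = (i, -1)} := by
  ext p
  simp only [Set.mem_setOf_eq, Set.mem_union, Set.mem_insert_iff, Set.mem_singleton_iff]
  constructor
  · rintro ⟨m, hm, x, y, hx0, hxm, hy0, hym, rfl⟩
    rw [my_floor_div _ _ hm, my_floor_div _ _ hm]
    set a : ℤ := (d : ℤ) * y - x with ha
    rcases eq_or_lt_of_le hy0 with hy | hy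
    · -- y = 0
      subst hy
      have ha0 : a = -x := by simp [ha]
      have hq4 : (-(0:ℤ)) / m = 0 := by simp
      rcases eq_or_lt_of_le hx0 with hx | hx
      · have h1 : a / m = 0 := my_ediv_eq m a 0 hm (by omega) (by omega)
        left; right; right; right; simp [h1, hq4]
      · have h1 : a / m = -1 := my_ediv_eq m a (-1) hm (by omega) (by omega)
        left; right; right; left; simp [h1, hq4]
    · -- 0 < y
      have hq4 : (-y) / m = -1 := my_ediv_eq m (-y) (-1) hm (by omega) (by omega)
      set q := a / m with hq
      have hmod : a % m + m * (a / m) = a := Int.emod_add_mul_ediv a m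
      rw [← hq] at hmod
      have hmod0 : 0 ≤ a % m := Int.emod_nonneg a (ne_of_gt hm)
      have hmodm : a % m < m := Int.emod_lt_of_pos a hm
      have hdy : 0 ≤ (d : ℤ) * y := by positivity
      have hqlow : -1 ≤ q := by
        by_contra hc
        push_neg at hc
        have h2 : m * q ≤ m * (-2) := mul_le_mul_of_nonneg_left (by omega) hm.le
        omega
      rcases lt_trichotomy q 0 with h | h | h
      · have hq1 : q = -1 := by omega
        left; left; simp [hq1, hq4]
      · left; right; left; simp [h, hq4]
      · -- 1 ≤ q, show q ≤ d - 1
        right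
        refine ⟨q, h, ?_, by simp [hq4]⟩
        have hmq : m ≤ m * q := le_mul_of_one_le_right hm.le h
        have hd1 : 1 ≤ (d : ℤ) := by
          by_contra hc
          have hd0 : (d : ℤ) = 0 := by omega
          rw [hd0] at ha
          omega
        have hub : a < (d : ℤ) * m := by
          nlinarith [mul_le_mul_of_nonneg_left (show y ≤ m - 1 by omega)
            (show (0:ℤ) ≤ (d:ℤ) by positivity)]
        have hqd : q < (d : ℤ) := by
          by_contra hc
          push_neg at hc
          have h2 : m * (d : ℤ) ≤ m * q := mul_le_mul_of_nonneg_left hc hm.le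
          nlinarith
        omega
  · rintro ((rfl | rfl | rfl | rfl) | ⟨i, hi1, hi2, rfl⟩)
    · exact ⟨d + 2, by omega, d + 1, 1, by omega, by omega, by omega, by omega, by
        rw [my_floor_div _ _ (by omega), my_floor_div _ _ (by omega)]
        have h1 : ((d : ℤ) * 1 - (d + 1)) / (d + 2) = -1 :=
          my_ediv_eq _ _ _ (by omega) (by omega) (by omega)
        have h2 : (-1 : ℤ) / (d + 2) = -1 :=
          my_ediv_eq _ _ _ (by omega) (by omega) (by omega)
        simp [h1, h2]⟩
    · exact ⟨d + 2, by omega, d, 1, by omega, by omega, by omega, by omega, by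
        rw [my_floor_div _ _ (by omega), my_floor_div _ _ (by omega)]
        have h1 : ((d : ℤ) * 1 - d) / (d + 2) = 0 :=
          my_ediv_eq _ _ _ (by omega) (by omega) (by omega)
        have h2 : (-1 : ℤ) / (d + 2) = -1 :=
          my_ediv_eq _ _ _ (by omega) (by omega) (by omega)
        simp [h1, h2]⟩
    · exact ⟨2, by omega, 1, 0, by omega, by omega, by omega, by omega, by
        rw [my_floor_div _ _ (by omega), my_floor_div _ _ (by omega)]
        have h1 : ((d : ℤ) * 0 - 1) / 2 = -1 :=
          my_ediv_eq _ _ _ (by omega) (by omega) (by omega)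
        simp [h1]⟩
    · exact ⟨1, by omega, 0, 0, by omega, by omega, by omega, by omega, by
        rw [my_floor_div _ _ (by omega), my_floor_div _ _ (by omega)]
        simp⟩
    · -- (i, -1), 1 ≤ i ≤ d-1 ; take m = d, x = 0, y = i
      have hd2 : 2 ≤ (d : ℤ) := by omega
      exact ⟨d, by omega, 0, i, by omega, by omega, by omega, by omega, by
        rw [my_floor_div _ _ (by omega), my_floor_div _ _ (by omega)]
        have h1 : ((d : ℤ) * i) / d = i :=
          my_ediv_eq _ _ _ (by omega) (by nlinarith) (by nlinarith)
        have h2 : (-i) / (d : ℤ) = -1 :=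
          my_ediv_eq _ _ _ (by omega) (by omega) (by omega)
        simp [h1, h2]⟩
end

section
/- Fix an integer d ≥ 1. Let T(d) ⊆ ℤ × ℤ be the union over all positive integers m of the sets { (⌊(d*y − x + d − 2 : ℚ)/m⌋, ⌊(−y − 2 : ℚ)/m⌋) : x, y ∈ ℤ, 0 ≤ x < m, 0 ≤ y < m }. Then T(d) = { (j,−1) : j ∈ ℤ, −1 ≤ j ≤ d−1 } ∪ { (d−1,−2), (d−2,−2) }. -/
private lemma floor_int_div' (a m : ℤ) (hm : 0 < m) :
    ⌊((a : ℚ)) / ((m : ℚ))⌋ = a / m := by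
  lift m to ℕ using hm.le
  exact_mod_cast Rat.floor_intCast_div_natCast a m

private lemma ediv_eq' (a m q : ℤ) (hm : 0 < m) (h1 : m * q ≤ a) (h2 : a < m * (q + 1)) :
    a / m = q := by
  have hd := Int.mul_ediv_add_emod a m
  have hr0 : 0 ≤ a % m := Int.emod_nonneg a hm.ne'
  have hrm : a % m < m := Int.emod_lt_of_pos a hm
  have hlt1 : m * q < m * (a / m + 1) := by nlinarith
  have hlt2 : m * (a / m) < m * (q + 1) := by nlinarith
  have e1 : q < a / m + 1 := lt_of_mul_lt_mul_left hlt1 hm.le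
  have e2 : a / m < q + 1 := lt_of_mul_lt_mul_left hlt2 hm.le
  omega

/-- §4.1: the set `𝔇(K_X)` of Thomsen coefficient pairs on the Hirzebruch surface
`Σ_d`, `d ≥ 1`. -/
theorem stmt_7 (d : ℤ) (hd : 1 ≤ d) :
    {p : ℤ × ℤ | ∃ m : ℤ, 0 < m ∧ ∃ x y : ℤ,
        0 ≤ x ∧ x < m ∧ 0 ≤ y ∧ y < m ∧
        p = (⌊((d * y - x + d - 2 : ℤ) : ℚ) / (m : ℚ)⌋,
             ⌊((-y - 2 : ℤ) : ℚ) / (m : ℚ)⌋)} =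
    {p : ℤ × ℤ | ∃ j : ℤ, -1 ≤ j ∧ j ≤ d - 1 ∧ p = (j, -1)} ∪
      ({(d - 1, -2), (d - 2, -2)} : Set (ℤ × ℤ)) := by
  ext p
  simp only [Set.mem_setOf_eq, Set.mem_union, Set.mem_insert_iff, Set.mem_singleton_iff]
  constructor
  · rintro ⟨m, hm, x, y, hx0, hxm, hy0, hym, hp⟩
    rw [floor_int_div' _ _ hm, floor_int_div' _ _ hm] at hp
    set a : ℤ := d * y - x + d - 2 with ha
    set b : ℤ := -y - 2 with hb
    have hda := Int.mul_ediv_add_emod a m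
    have hra0 : 0 ≤ a % m := Int.emod_nonneg a hm.ne'
    have hram : a % m < m := Int.emod_lt_of_pos a hm
    have hdb := Int.mul_ediv_add_emod b m
    have hrb0 : 0 ≤ b % m := Int.emod_nonneg b hm.ne'
    have hrbm : b % m < m := Int.emod_lt_of_pos b hm
    set q3 : ℤ := a / m
    set q4 : ℤ := b / m
    -- q4 ∈ {-1, -2}
    have hq4le : q4 ≤ -1 := by
      have h : m * q4 < m * 0 := by omega
      have := lt_of_mul_lt_mul_left h hm.le
      omega
    have hq4ge : -2 ≤ q4 := by
      have h : m * (-2) ≤ m * q4 := by omega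
      have := le_of_mul_le_mul_left h hm
      omega
    have hdy0 : 0 ≤ d * y := mul_nonneg (by omega) hy0
    rcases (by omega : q4 = -1 ∨ q4 = -2) with h4 | h4
    · -- q4 = -1 : then y ≤ m - 2, and -1 ≤ q3 ≤ d - 1
      have hym2 : y ≤ m - 2 := by
        rw [h4] at hdb; omega
      have hdy : d * y ≤ d * (m - 2) := mul_le_mul_of_nonneg_left hym2 (by omega)
      have hq3ge : -1 ≤ q3 := by
        have h : m * (-2) < m * q3 := by omega
        have := lt_of_mul_lt_mul_left h hm.le
        omega
      have hq3le : q3 ≤ d - 1 := by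
        have h : m * q3 < m * d := by nlinarith
        have := lt_of_mul_lt_mul_left h hm.le
        omega
      exact Or.inl ⟨q3, hq3ge, hq3le, by rw [hp, h4]⟩
    · -- q4 = -2 : then y = m - 1, and q3 ∈ {d-1, d-2}
      have hy : y = m - 1 := by
        rw [h4] at hdb; omega
      have hdy : d * y = d * m - d := by rw [hy]; ring
      have hcomm : m * d = d * m := mul_comm m d
      have han : m * q3 - m * d = -x - 2 - a % m := by omega
      have hq3le : q3 ≤ d - 1 := by
        have h : m * q3 < m * d := by nlinarith
        have := lt_of_mul_lt_mul_left h hm.le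
        omega
      have hq3ge : d - 2 ≤ q3 := by
        have h : m * (d - 2) ≤ m * q3 := by nlinarith
        have := le_of_mul_le_mul_left h hm
        omega
      rcases (by omega : q3 = d - 1 ∨ q3 = d - 2) with h3 | h3
      · exact Or.inr (Or.inl (by rw [hp, h3, h4]))
      · exact Or.inr (Or.inr (by rw [hp, h3, h4]))
  · rintro (⟨j, hj1, hj2, hp⟩ | hp | hp)
    · rcases (by omega : j = -1 ∨ j = d - 1 ∨ (0 ≤ j ∧ j ≤ d - 2)) with h | h | h
      · -- j = -1 : m = d + 1, x = d, y = 0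
        refine ⟨d + 1, by omega, d, 0, by omega, by omega, by omega, by omega, ?_⟩
        rw [hp, h, floor_int_div' _ _ (by omega : (0:ℤ) < d + 1),
          floor_int_div' _ _ (by omega : (0:ℤ) < d + 1)]
        have h1 : (d * 0 - d + d - 2) / (d + 1) = -1 :=
          ediv_eq' _ _ _ (by omega) (by nlinarith) (by nlinarith)
        have h2 : (-(0:ℤ) - 2) / (d + 1) = -1 :=
          ediv_eq' _ _ _ (by omega) (by nlinarith) (by nlinarith)
        rw [h1, h2]
      · -- j = d - 1 : m = d + 2, x = 0, y = d
        refine ⟨d + 2, by omega, 0, d, by omega, by omega, by omega, by omega, ?_⟩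
        rw [hp, h, floor_int_div' _ _ (by omega : (0:ℤ) < d + 2),
          floor_int_div' _ _ (by omega : (0:ℤ) < d + 2)]
        have h1 : (d * d - 0 + d - 2) / (d + 2) = d - 1 :=
          ediv_eq' _ _ _ (by omega) (by nlinarith) (by nlinarith)
        have h2 : (-d - 2) / (d + 2) = -1 :=
          ediv_eq' _ _ _ (by omega) (by nlinarith) (by nlinarith)
        rw [h1, h2]
      · -- 0 ≤ j ≤ d - 2 : m = 2d, x = 2d - 2, y = 2j + 1
        refine ⟨2 * d, by omega, 2 * d - 2, 2 * j + 1, by omega, by omega, by omega,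
          by omega, ?_⟩
        rw [hp, floor_int_div' _ _ (by omega : (0:ℤ) < 2 * d),
          floor_int_div' _ _ (by omega : (0:ℤ) < 2 * d)]
        have h1 : (d * (2 * j + 1) - (2 * d - 2) + d - 2) / (2 * d) = j :=
          ediv_eq' _ _ _ (by omega) (by nlinarith) (by nlinarith)
        have h2 : (-(2 * j + 1) - 2) / (2 * d) = -1 :=
          ediv_eq' _ _ _ (by omega) (by nlinarith) (by nlinarith)
        rw [h1, h2]
    · -- (d - 1, -2) : m = 2, x = 0, y = 1
      refine ⟨2, by omega, 0, 1, by omega, by omega, by omega, by omega, ?_⟩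
      rw [hp, floor_int_div' _ _ (by omega : (0:ℤ) < 2),
        floor_int_div' _ _ (by omega : (0:ℤ) < 2)]
      have h1 : (d * 1 - 0 + d - 2) / 2 = d - 1 :=
        ediv_eq' _ _ _ (by omega) (by nlinarith) (by nlinarith)
      have h2 : (-(1:ℤ) - 2) / 2 = -2 :=
        ediv_eq' _ _ _ (by omega) (by omega) (by omega)
      rw [h1, h2]
    · -- (d - 2, -2) : m = 1, x = 0, y = 0
      refine ⟨1, by omega, 0, 0, by omega, by omega, by omega, by omega, ?_⟩
      rw [hp, floor_int_div' _ _ (by omega : (0:ℤ) < 1),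
        floor_int_div' _ _ (by omega : (0:ℤ) < 1)]
      have h1 : (d * 0 - 0 + d - 2) / 1 = d - 2 := by omega
      have h2 : (-(0:ℤ) - 2) / 1 = -2 := by omega
      rw [h1, h2]
end

section
/- Let S ⊆ ℤ⁵ be the union over all positive integers m of the sets { (⌊(−y + z : ℚ)/m⌋, ⌊(−y : ℚ)/m⌋, ⌊(−z : ℚ)/m⌋, ⌊(y − z : ℚ)/m⌋, ⌊(−x + y : ℚ)/m⌋) : x, y, z ∈ ℤ, 0 ≤ x < m, 0 ≤ y < m, 0 ≤ z < m }. Then S = { (0,0,0,0,0), (0,0,0,0,−1), (0,0,−1,−1,0), (0,0,−1,−1,−1), (−1,−1,0,0,0), (−1,−1,0,0,−1), (0,−1,−1,−1,0), (0,−1,−1,−1,−1), (0,−1,−1,0,0), (0,−1,−1,0,−1), (−1,−1,−1,0,0), (−1,−1,−1,0,−1) }; in particular S has exactly 12 elements. -/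
lemma floor01 (a m : ℤ) (hm : 0 < m) (h0 : -m ≤ a) (h1 : a < m) :
    ⌊(a : ℚ) / (m : ℚ)⌋ = if 0 ≤ a then 0 else -1 := by
  have hm' : (0:ℚ) < (m:ℚ) := by exact_mod_cast hm
  have ha1 : (a:ℚ) < m := by exact_mod_cast h1
  have ha0 : (-m:ℚ) ≤ a := by exact_mod_cast h0
  split_ifs with h
  · have : (0:ℚ) ≤ a := by exact_mod_cast h
    rw [Int.floor_eq_iff]
    refine ⟨by positivity, ?_⟩
    push_cast
    rw [div_lt_iff₀ hm']
    linarith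
  · have ha : (a:ℚ) < 0 := by exact_mod_cast (by omega : a < 0)
    rw [Int.floor_eq_iff]
    constructor
    · rw [le_div_iff₀ hm']
      push_cast
      linarith
    · push_cast
      calc (a:ℚ)/m < 0 := div_neg_of_neg_of_pos ha hm'
        _ ≤ -1 + 1 := by norm_num

lemma tuple_eq (m x y z : ℤ) (hm : 0 < m) (hx0 : 0 ≤ x) (hxm : x < m)
    (hy0 : 0 ≤ y) (hym : y < m) (hz0 : 0 ≤ z) (hzm : z < m) :
    ((⌊((-y + z : ℤ) : ℚ) / (m : ℚ)⌋, ⌊((-y : ℤ) : ℚ) / (m : ℚ)⌋,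
      ⌊((-z : ℤ) : ℚ) / (m : ℚ)⌋, ⌊((y - z : ℤ) : ℚ) / (m : ℚ)⌋,
      ⌊((-x + y : ℤ) : ℚ) / (m : ℚ)⌋) : ℤ × ℤ × ℤ × ℤ × ℤ) =
    ((if 0 ≤ -y + z then 0 else -1), (if 0 ≤ -y then 0 else -1),
     (if 0 ≤ -z then 0 else -1), (if 0 ≤ y - z then 0 else -1),
     (if 0 ≤ -x + y then 0 else -1)) := by
  rw [floor01 _ _ hm (by omega) (by omega), floor01 _ _ hm (by omega) (by omega),
      floor01 _ _ hm (by omega) (by omega), floor01 _ _ hm (by omega) (by omega),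
      floor01 _ _ hm (by omega) (by omega)]

lemma key_eq :
    {p : ℤ × ℤ × ℤ × ℤ × ℤ | ∃ m : ℤ, 0 < m ∧ ∃ x y z : ℤ,
        0 ≤ x ∧ x < m ∧ 0 ≤ y ∧ y < m ∧ 0 ≤ z ∧ z < m ∧
        p = (⌊((-y + z : ℤ) : ℚ) / (m : ℚ)⌋, ⌊((-y : ℤ) : ℚ) / (m : ℚ)⌋,
             ⌊((-z : ℤ) : ℚ) / (m : ℚ)⌋, ⌊((y - z : ℤ) : ℚ) / (m : ℚ)⌋,
             ⌊((-x + y : ℤ) : ℚ) / (m : ℚ)⌋)} =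
      ({(0, 0, 0, 0, 0), (0, 0, 0, 0, -1), (0, 0, -1, -1, 0), (0, 0, -1, -1, -1),
        (-1, -1, 0, 0, 0), (-1, -1, 0, 0, -1), (0, -1, -1, -1, 0),
        (0, -1, -1, -1, -1), (0, -1, -1, 0, 0), (0, -1, -1, 0, -1),
        (-1, -1, -1, 0, 0), (-1, -1, -1, 0, -1)} : Set (ℤ × ℤ × ℤ × ℤ × ℤ)) := by
  ext p
  constructor
  · rintro ⟨m, hm, x, y, z, hx0, hxm, hy0, hym, hz0, hzm, rfl⟩
    rw [tuple_eq m x y z hm hx0 hxm hy0 hym hz0 hzm]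
    simp only [Set.mem_insert_iff, Set.mem_singleton_iff, Prod.mk.injEq]
    split_ifs <;> omega
  · intro hp
    simp only [Set.mem_insert_iff, Set.mem_singleton_iff] at hp
    rcases hp with rfl|rfl|rfl|rfl|rfl|rfl|rfl|rfl|rfl|rfl|rfl|rfl
    · exact ⟨1, by norm_num, 0, 0, 0, by norm_num, by norm_num, by norm_num, by norm_num,
        by norm_num, by norm_num,
        by rw [tuple_eq 1 0 0 0 (by norm_num) (by norm_num) (by norm_num) (by norm_num)
          (by norm_num) (by norm_num) (by norm_num)]; norm_num⟩
    · exact ⟨2, by norm_num, 1, 0, 0, by norm_num, by norm_num, by norm_num, by norm_num,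
        by norm_num, by norm_num,
        by rw [tuple_eq 2 1 0 0 (by norm_num) (by norm_num) (by norm_num) (by norm_num)
          (by norm_num) (by norm_num) (by norm_num)]; norm_num⟩
    · exact ⟨2, by norm_num, 0, 0, 1, by norm_num, by norm_num, by norm_num, by norm_num,
        by norm_num, by norm_num,
        by rw [tuple_eq 2 0 0 1 (by norm_num) (by norm_num) (by norm_num) (by norm_num)
          (by norm_num) (by norm_num) (by norm_num)]; norm_num⟩
    · exact ⟨2, by norm_num, 1, 0, 1, by norm_num, by norm_num, by norm_num, by norm_num,
        by norm_num, by norm_num,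
        by rw [tuple_eq 2 1 0 1 (by norm_num) (by norm_num) (by norm_num) (by norm_num)
          (by norm_num) (by norm_num) (by norm_num)]; norm_num⟩
    · exact ⟨2, by norm_num, 0, 1, 0, by norm_num, by norm_num, by norm_num, by norm_num,
        by norm_num, by norm_num,
        by rw [tuple_eq 2 0 1 0 (by norm_num) (by norm_num) (by norm_num) (by norm_num)
          (by norm_num) (by norm_num) (by norm_num)]; norm_num⟩
    · exact ⟨3, by norm_num, 2, 1, 0, by norm_num, by norm_num, by norm_num, by norm_num,
        by norm_num, by norm_num,
        by rw [tuple_eq 3 2 1 0 (by norm_num) (by norm_num) (by norm_num) (by norm_num)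
          (by norm_num) (by norm_num) (by norm_num)]; norm_num⟩
    · exact ⟨3, by norm_num, 0, 1, 2, by norm_num, by norm_num, by norm_num, by norm_num,
        by norm_num, by norm_num,
        by rw [tuple_eq 3 0 1 2 (by norm_num) (by norm_num) (by norm_num) (by norm_num)
          (by norm_num) (by norm_num) (by norm_num)]; norm_num⟩
    · exact ⟨3, by norm_num, 2, 1, 2, by norm_num, by norm_num, by norm_num, by norm_num,
        by norm_num, by norm_num,
        by rw [tuple_eq 3 2 1 2 (by norm_num) (by norm_num) (by norm_num) (by norm_num)
          (by norm_num) (by norm_num) (by norm_num)]; norm_num⟩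
    · exact ⟨2, by norm_num, 0, 1, 1, by norm_num, by norm_num, by norm_num, by norm_num,
        by norm_num, by norm_num,
        by rw [tuple_eq 2 0 1 1 (by norm_num) (by norm_num) (by norm_num) (by norm_num)
          (by norm_num) (by norm_num) (by norm_num)]; norm_num⟩
    · exact ⟨3, by norm_num, 2, 1, 1, by norm_num, by norm_num, by norm_num, by norm_num,
        by norm_num, by norm_num,
        by rw [tuple_eq 3 2 1 1 (by norm_num) (by norm_num) (by norm_num) (by norm_num)
          (by norm_num) (by norm_num) (by norm_num)]; norm_num⟩
    · exact ⟨3, by norm_num, 0, 2, 1, by norm_num, by norm_num, by norm_num, by norm_num,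
        by norm_num, by norm_num,
        by rw [tuple_eq 3 0 2 1 (by norm_num) (by norm_num) (by norm_num) (by norm_num)
          (by norm_num) (by norm_num) (by norm_num)]; norm_num⟩
    · exact ⟨4, by norm_num, 3, 2, 1, by norm_num, by norm_num, by norm_num, by norm_num,
        by norm_num, by norm_num,
        by rw [tuple_eq 4 3 2 1 (by norm_num) (by norm_num) (by norm_num) (by norm_num)
          (by norm_num) (by norm_num) (by norm_num)]; norm_num⟩

/-- §4.4: the set `𝔇` of Thomsen coefficient 5-tuples on the toric Fano 3-fold
of type (18). -/
theorem stmt_10 :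
    {p : ℤ × ℤ × ℤ × ℤ × ℤ | ∃ m : ℤ, 0 < m ∧ ∃ x y z : ℤ,
        0 ≤ x ∧ x < m ∧ 0 ≤ y ∧ y < m ∧ 0 ≤ z ∧ z < m ∧
        p = (⌊((-y + z : ℤ) : ℚ) / (m : ℚ)⌋, ⌊((-y : ℤ) : ℚ) / (m : ℚ)⌋,
             ⌊((-z : ℤ) : ℚ) / (m : ℚ)⌋, ⌊((y - z : ℤ) : ℚ) / (m : ℚ)⌋,
             ⌊((-x + y : ℤ) : ℚ) / (m : ℚ)⌋)} =
      ({(0, 0, 0, 0, 0), (0, 0, 0, 0, -1), (0, 0, -1, -1, 0), (0, 0, -1, -1, -1),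
        (-1, -1, 0, 0, 0), (-1, -1, 0, 0, -1), (0, -1, -1, -1, 0),
        (0, -1, -1, -1, -1), (0, -1, -1, 0, 0), (0, -1, -1, 0, -1),
        (-1, -1, -1, 0, 0), (-1, -1, -1, 0, -1)} : Set (ℤ × ℤ × ℤ × ℤ × ℤ)) ∧
    Set.ncard {p : ℤ × ℤ × ℤ × ℤ × ℤ | ∃ m : ℤ, 0 < m ∧ ∃ x y z : ℤ,
        0 ≤ x ∧ x < m ∧ 0 ≤ y ∧ y < m ∧ 0 ≤ z ∧ z < m ∧
        p = (⌊((-y + z : ℤ) : ℚ) / (m : ℚ)⌋, ⌊((-y : ℤ) : ℚ) / (m : ℚ)⌋,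
             ⌊((-z : ℤ) : ℚ) / (m : ℚ)⌋, ⌊((y - z : ℤ) : ℚ) / (m : ℚ)⌋,
             ⌊((-x + y : ℤ) : ℚ) / (m : ℚ)⌋)} = 12 := by
  refine ⟨key_eq, ?_⟩
  rw [key_eq]
  rw [show ({(0, 0, 0, 0, 0), (0, 0, 0, 0, -1), (0, 0, -1, -1, 0), (0, 0, -1, -1, -1),
        (-1, -1, 0, 0, 0), (-1, -1, 0, 0, -1), (0, -1, -1, -1, 0),
        (0, -1, -1, -1, -1), (0, -1, -1, 0, 0), (0, -1, -1, 0, -1),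
        (-1, -1, -1, 0, 0), (-1, -1, -1, 0, -1)} : Set (ℤ × ℤ × ℤ × ℤ × ℤ)) =
      (↑({(0, 0, 0, 0, 0), (0, 0, 0, 0, -1), (0, 0, -1, -1, 0), (0, 0, -1, -1, -1),
        (-1, -1, 0, 0, 0), (-1, -1, 0, 0, -1), (0, -1, -1, -1, 0),
        (0, -1, -1, -1, -1), (0, -1, -1, 0, 0), (0, -1, -1, 0, -1),
        (-1, -1, -1, 0, 0), (-1, -1, -1, 0, -1)} : Finset (ℤ × ℤ × ℤ × ℤ × ℤ)) :
        Set (ℤ × ℤ × ℤ × ℤ × ℤ)) by simp]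
  rw [Set.ncard_coe_finset]
  decide
end

section
/- There is a positive integer M such that for every integer m ≥ M, the set { (⌊(x − z + 3 : ℚ)/m⌋, ⌊(−z : ℚ)/m⌋, ⌊(−x − y + 2*z + 3 : ℚ)/m⌋) : x, y, z ∈ ℤ, 0 ≤ x < m, 0 ≤ y < m, 0 ≤ z < m } ⊆ ℤ³ equals the 15-element set { (0,0,0), (0,0,−1), (0,0,−2), (0,−1,0), (0,−1,−1), (0,−1,−2), (−1,−1,−1), (−1,−1,0), (−1,−1,1), (1,0,−1), (1,0,−2), (1,−1,−1), (1,−1,−2), (0,−1,1), (−1,−1,2) }. -/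
lemma fl (a m q : ℤ) (hm : 0 < m) (h1 : q * m ≤ a) (h2 : a < (q + 1) * m) :
    ⌊(a : ℚ) / (m : ℚ)⌋ = q := by
  have hm' : (0 : ℚ) < m := by exact_mod_cast hm
  rw [Int.floor_eq_iff]
  constructor
  · rw [le_div_iff₀ hm']; exact_mod_cast h1
  · rw [div_lt_iff₀ hm']; exact_mod_cast h2

lemma flb (a m : ℤ) (hm : 0 < m) :
    ⌊(a : ℚ) / (m : ℚ)⌋ * m ≤ a ∧ a < (⌊(a : ℚ) / (m : ℚ)⌋ + 1) * m := by
  have hm' : (0 : ℚ) < m := by exact_mod_cast hm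
  constructor
  · have h := Int.floor_le ((a : ℚ) / m)
    rw [le_div_iff₀ hm'] at h
    exact_mod_cast h
  · have h := Int.lt_floor_add_one ((a : ℚ) / m)
    rw [div_lt_iff₀ hm'] at h
    exact_mod_cast h

lemma qle (q k m a : ℤ) (hm : 0 < m) (h1 : q * m ≤ a) (h2 : a < (k + 1) * m) : q ≤ k := by
  have h3 : q * m < (k + 1) * m := lt_of_le_of_lt h1 h2
  have := lt_of_mul_lt_mul_right h3 (le_of_lt hm)
  omega

lemma qge (q k m a : ℤ) (hm : 0 < m) (h1 : k * m ≤ a) (h2 : a < (q + 1) * m) : k ≤ q := by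
  have h3 : k * m < (q + 1) * m := lt_of_le_of_lt h1 h2
  have := lt_of_mul_lt_mul_right h3 (le_of_lt hm)
  omega

lemma mem_helper (m x y z q4 q5 q6 : ℤ) (hm : 0 < m)
    (h : 0 ≤ x ∧ x < m ∧ 0 ≤ y ∧ y < m ∧ 0 ≤ z ∧ z < m ∧
      q4 * m ≤ x - z + 3 ∧ x - z + 3 < (q4 + 1) * m ∧
      q5 * m ≤ -z ∧ -z < (q5 + 1) * m ∧
      q6 * m ≤ -x - y + 2 * z + 3 ∧ -x - y + 2 * z + 3 < (q6 + 1) * m) :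
    (q4, q5, q6) ∈ {p : ℤ × ℤ × ℤ | ∃ x y z : ℤ,
      0 ≤ x ∧ x < m ∧ 0 ≤ y ∧ y < m ∧ 0 ≤ z ∧ z < m ∧
      p = (⌊((x - z + 3 : ℤ) : ℚ) / (m : ℚ)⌋, ⌊((-z : ℤ) : ℚ) / (m : ℚ)⌋,
           ⌊((-x - y + 2 * z + 3 : ℤ) : ℚ) / (m : ℚ)⌋)} := by
  obtain ⟨h1, h2, h3, h4, h5, h6, h7, h8, h9, h10, h11, h12⟩ := h
  exact ⟨x, y, z, h1, h2, h3, h4, h5, h6, by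
    rw [fl _ _ _ hm h7 h8, fl _ _ _ hm h9 h10, fl _ _ _ hm h11 h12]⟩

set_option maxHeartbeats 1000000 in
/-- §5.2: for all sufficiently large `m`, the set `𝔇(ω_X^{-3})_m` of Thomsen
coefficient triples on the toric Fano 3-fold of type (11) equals an explicit
15-element set. -/
theorem stmt_13 :
    ∃ M : ℤ, 0 < M ∧ ∀ m : ℤ, M ≤ m →
      {p : ℤ × ℤ × ℤ | ∃ x y z : ℤ,
          0 ≤ x ∧ x < m ∧ 0 ≤ y ∧ y < m ∧ 0 ≤ z ∧ z < m ∧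
          p = (⌊((x - z + 3 : ℤ) : ℚ) / (m : ℚ)⌋, ⌊((-z : ℤ) : ℚ) / (m : ℚ)⌋,
               ⌊((-x - y + 2 * z + 3 : ℤ) : ℚ) / (m : ℚ)⌋)} =
      ({(0, 0, 0), (0, 0, -1), (0, 0, -2), (0, -1, 0), (0, -1, -1), (0, -1, -2),
        (-1, -1, -1), (-1, -1, 0), (-1, -1, 1), (1, 0, -1), (1, 0, -2),
        (1, -1, -1), (1, -1, -2), (0, -1, 1), (-1, -1, 2)} : Set (ℤ × ℤ × ℤ)) := by
  refine ⟨20, by norm_num, fun m hM => ?_⟩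
  have hm : (0 : ℤ) < m := by omega
  apply Set.eq_of_subset_of_subset
  · rintro p ⟨x, y, z, hx0, hxm, hy0, hym, hz0, hzm, rfl⟩
    obtain ⟨h4a, h4b⟩ := flb (x - z + 3) m hm
    obtain ⟨h5a, h5b⟩ := flb (-z) m hm
    obtain ⟨h6a, h6b⟩ := flb (-x - y + 2 * z + 3) m hm
    set q4 := ⌊((x - z + 3 : ℤ) : ℚ) / (m : ℚ)⌋ with hq4
    set q5 := ⌊((-z : ℤ) : ℚ) / (m : ℚ)⌋ with hq5
    set q6 := ⌊((-x - y + 2 * z + 3 : ℤ) : ℚ) / (m : ℚ)⌋ with hq6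
    clear_value q4 q5 q6
    have hb1 : q4 ≤ 1 := qle q4 1 m _ hm h4a (by omega)
    have hb2 : -1 ≤ q4 := qge q4 (-1) m _ hm (by omega) h4b
    have hb3 : q5 ≤ 0 := qle q5 0 m _ hm h5a (by omega)
    have hb4 : -1 ≤ q5 := qge q5 (-1) m _ hm (by omega) h5b
    have hb5 : q6 ≤ 2 := qle q6 2 m _ hm h6a (by omega)
    have hb6 : -2 ≤ q6 := qge q6 (-2) m _ hm (by omega) h6b
    simp only [Set.mem_insert_iff, Set.mem_singleton_iff, Prod.mk.injEq]
    have c4 : q4 = -1 ∨ q4 = 0 ∨ q4 = 1 := by omega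
    have c5 : q5 = -1 ∨ q5 = 0 := by omega
    have c6 : q6 = -2 ∨ q6 = -1 ∨ q6 = 0 ∨ q6 = 1 ∨ q6 = 2 := by omega
    rcases c4 with rfl | rfl | rfl <;> rcases c5 with rfl | rfl <;>
      rcases c6 with rfl | rfl | rfl | rfl | rfl <;> first | (exfalso; omega) | norm_num
  · intro p hp
    simp only [Set.mem_insert_iff, Set.mem_singleton_iff] at hp
    rcases hp with rfl | rfl | rfl | rfl | rfl | rfl | rfl | rfl | rfl | rfl | rfl | rfl | rfl | rfl | rfl
    · exact mem_helper m 0 0 0 0 0 0 hm (by omega)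
    · exact mem_helper m 0 4 0 0 0 (-1) hm (by omega)
    · exact mem_helper m (m - 4) (m - 1) 0 0 0 (-2) hm (by omega)
    · exact mem_helper m 0 0 1 0 (-1) 0 hm (by omega)
    · exact mem_helper m 0 6 1 0 (-1) (-1) hm (by omega)
    · exact mem_helper m (m - 3) (m - 1) 1 0 (-1) (-2) hm (by omega)
    · exact mem_helper m 0 12 4 (-1) (-1) (-1) hm (by omega)
    · exact mem_helper m 0 0 4 (-1) (-1) 0 hm (by omega)
    · exact mem_helper m 0 2 (m - 1) (-1) (-1) 1 hm (by omega)
    · exact mem_helper m (m - 3) 0 0 1 0 (-1) hm (by omega)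
    · exact mem_helper m (m - 1) 5 0 1 0 (-2) hm (by omega)
    · exact mem_helper m (m - 1) 0 1 1 (-1) (-1) hm (by omega)
    · exact mem_helper m (m - 1) 7 1 1 (-1) (-2) hm (by omega)
    · exact mem_helper m (m - 4) 0 (m - 1) 0 (-1) 1 hm (by omega)
    · exact mem_helper m 0 0 (m - 1) (-1) (-1) 2 hm (by omega)
end
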